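/- Let X be uniform on [α,β] and Y follow Pareto-I with G(t) = 1 − α/t, t > α > 0. Then for α < t₁ < t₂ < β: H^w_{X,Y}(t₁,t₂) + m_X(t₁,t₂) ln h₁^Y(t₁,t₂) = 2[(1/(t₂−t₁))∫_{t₁}^{t₂} x ln x dx − ((t₁+t₂)/2) ln t₁] ≥ 0. -/

import Mathlib

open MeasureTheory Real
open intervalIntegral

/-- Interval inaccuracy measure H_{X,Y}(t₁,t₂). -/
noncomputable def inacc (f F g G : ℝ → ℝ) (t₁ t₂ : ℝ) : ℝ :=
  -∫ x in t₁..t₂, f x / (F t₂ - F t₁) * Real.log (g x / (G t₂ - G t₁))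

/-- Weighted interval inaccuracy measure H^w_{X,Y}(t₁,t₂). -/
noncomputable def wInacc (f F g G : ℝ → ℝ) (t₁ t₂ : ℝ) : ℝ :=
  -∫ x in t₁..t₂, x * (f x / (F t₂ - F t₁)) * Real.log (g x / (G t₂ - G t₁))

/-- General conditional mean m_X(t₁,t₂) = E(X | t₁ < X < t₂). -/
noncomputable def gcm (f F : ℝ → ℝ) (t₁ t₂ : ℝ) : ℝ :=
  (∫ x in t₁..t₂, x * f x) / (F t₂ - F t₁)
/-- First generalized failure rate h₁(t₁,t₂) = g(t₁)/(G(t₂)-G(t₁)). -/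
noncomputable def gfr₁ (g G : ℝ → ℝ) (t₁ t₂ : ℝ) : ℝ := g t₁ / (G t₂ - G t₁)

theorem stmt11 (α β t₁ t₂ : ℝ) (hα : 0 < α) (hαβ : α < β)
    (ht₁ : α < t₁) (ht : t₁ < t₂) (ht₂ : t₂ < β)
    -- X uniform on [α,β]
    (f F : ℝ → ℝ) (hf : f = fun x => if α < x ∧ x < β then 1 / (β - α) else 0)
    (hF : F = fun x => if x < α then 0 else if x < β then (x - α) / (β - α) else 1)
    -- Y Pareto-I: G(t) = 1 - α/t for t > α
    (g G : ℝ → ℝ) (hg : g = fun x => if α < x then α / x ^ 2 else 0)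
    (hG : G = fun x => if α < x then 1 - α / x else 0) :
    wInacc f F g G t₁ t₂ + gcm f F t₁ t₂ * Real.log (gfr₁ g G t₁ t₂)
      = 2 * ((1 / (t₂ - t₁)) * (∫ x in t₁..t₂, x * Real.log x)
          - ((t₁ + t₂) / 2) * Real.log t₁) ∧
    0 ≤ wInacc f F g G t₁ t₂ + gcm f F t₁ t₂ * Real.log (gfr₁ g G t₁ t₂) := by
  have ht1pos : 0 < t₁ := hα.trans ht₁
  have ht2pos : 0 < t₂ := ht1pos.trans ht
  have hdpos : 0 < t₂ - t₁ := by linarith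
  have hbapos : 0 < β - α := by linarith
  have ht1β : t₁ < β := ht.trans ht₂
  have ht2α : α < t₂ := ht₁.trans ht
  -- F difference
  have hFd : F t₂ - F t₁ = (t₂ - t₁) / (β - α) := by
    rw [hF]; simp only
    rw [if_neg (by linarith), if_pos ht₂, if_neg (by linarith), if_pos ht1β]
    field_simp
    ring
  -- G difference
  have hGd : G t₂ - G t₁ = α * (t₂ - t₁) / (t₁ * t₂) := by
    rw [hG]; simp only [if_pos ht₁, if_pos ht2α]
    field_simp; ring
  set C : ℝ := Real.log t₁ + Real.log t₂ - Real.log (t₂ - t₁) with hC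
  set I : ℝ := ∫ x in t₁..t₂, x * Real.log x with hI
  have huIcc : Set.uIcc t₁ t₂ = Set.Icc t₁ t₂ := Set.uIcc_of_le ht.le
  have hInt1 : IntervalIntegrable (fun x => x * Real.log x) volume t₁ t₂ := by
    apply ContinuousOn.intervalIntegrable
    apply continuousOn_id.mul
    apply Real.continuousOn_log.mono
    intro x hx
    rw [huIcc] at hx
    simp only [Set.mem_compl_iff, Set.mem_singleton_iff]
    have := hx.1; intro h; rw [h] at this; linarith
  -- wInacc computation
  have hw : wInacc f F g G t₁ t₂ = -(1 / (t₂ - t₁) * (C * ((t₂ ^ 2 - t₁ ^ 2) / 2) - 2 * I)) := by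
    rw [wInacc]
    have hcongr : ∀ x ∈ Set.uIcc t₁ t₂,
        x * (f x / (F t₂ - F t₁)) * Real.log (g x / (G t₂ - G t₁))
          = 1 / (t₂ - t₁) * (C * x - 2 * (x * Real.log x)) := by
      intro x hx
      rw [huIcc] at hx
      have hxt1 : t₁ ≤ x := hx.1
      have hxt2 : x ≤ t₂ := hx.2
      have hxα : α < x := lt_of_lt_of_le ht₁ hxt1
      have hxβ : x < β := lt_of_le_of_lt hxt2 ht₂
      have hxpos : 0 < x := hα.trans hxα
      rw [hFd, hGd, hf, hg]
      simp only [if_pos (And.intro hxα hxβ), if_pos hxα]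
      have h1 : (α / x ^ 2) / (α * (t₂ - t₁) / (t₁ * t₂)) = t₁ * t₂ / ((t₂ - t₁) * x ^ 2) := by
        field_simp
      rw [h1]
      have h2 : Real.log (t₁ * t₂ / ((t₂ - t₁) * x ^ 2)) = C - 2 * Real.log x := by
        rw [Real.log_div (by positivity) (by positivity),
            Real.log_mul (by positivity) (by positivity),
            Real.log_mul (by positivity) (by positivity), Real.log_pow, hC]
        push_cast; ring
      rw [h2]
      have h3 : (1 / (β - α)) / ((t₂ - t₁) / (β - α)) = 1 / (t₂ - t₁) := by
        field_simp
      rw [h3]; ring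
    rw [intervalIntegral.integral_congr hcongr]
    rw [intervalIntegral.integral_const_mul]
    rw [intervalIntegral.integral_sub
        (by apply ContinuousOn.intervalIntegrable; exact (continuousOn_const.mul continuousOn_id))
        (hInt1.const_mul 2)]
    rw [intervalIntegral.integral_const_mul, intervalIntegral.integral_const_mul,
        integral_id]
  -- gcm computation
  have hm : gcm f F t₁ t₂ = (t₁ + t₂) / 2 := by
    rw [gcm, hFd]
    have hcongr : ∀ x ∈ Set.uIcc t₁ t₂, x * f x = 1 / (β - α) * x := by
      intro x hx
      rw [huIcc] at hx
      have hxα : α < x := lt_of_lt_of_le ht₁ hx.1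
      have hxβ : x < β := lt_of_le_of_lt hx.2 ht₂
      rw [hf]; simp only [if_pos (And.intro hxα hxβ)]; ring
    rw [intervalIntegral.integral_congr hcongr, intervalIntegral.integral_const_mul,
        integral_id]
    field_simp
    ring
  -- gfr₁ computation
  have hh : Real.log (gfr₁ g G t₁ t₂) = Real.log t₂ - (Real.log t₁ + Real.log (t₂ - t₁)) := by
    rw [gfr₁, hGd, hg]
    simp only [if_pos ht₁]
    have h1 : (α / t₁ ^ 2) / (α * (t₂ - t₁) / (t₁ * t₂)) = t₂ / (t₁ * (t₂ - t₁)) := by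
      field_simp
    rw [h1, Real.log_div (by positivity) (by positivity),
        Real.log_mul (by positivity) (by positivity)]
  have heq : wInacc f F g G t₁ t₂ + gcm f F t₁ t₂ * Real.log (gfr₁ g G t₁ t₂)
      = 2 * ((1 / (t₂ - t₁)) * I - ((t₁ + t₂) / 2) * Real.log t₁) := by
    rw [hw, hm, hh, hC]
    field_simp
    ring
  refine ⟨heq, ?_⟩
  rw [heq]
  -- x * log t₁ ≤ x * log x on [t₁, t₂]
  have hmono : Real.log t₁ * ((t₂ ^ 2 - t₁ ^ 2) / 2) ≤ I := by
    have h0 : IntervalIntegrable (fun x => x * Real.log t₁) volume t₁ t₂ :=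
      (continuousOn_id.mul continuousOn_const).intervalIntegrable
    have hle := intervalIntegral.integral_mono_on ht.le h0 hInt1 (fun x hx => by
      have hxt1 : t₁ ≤ x := hx.1
      have hxpos : 0 ≤ x := le_of_lt (ht1pos.trans_le hxt1)
      exact mul_le_mul_of_nonneg_left (Real.log_le_log ht1pos hxt1) hxpos)
    rw [intervalIntegral.integral_mul_const, integral_id] at hle
    linarith [hle]
  have hkey : ((t₁ + t₂) / 2) * Real.log t₁ ≤ (1 / (t₂ - t₁)) * I := by
    rw [show (1 : ℝ) / (t₂ - t₁) * I = I / (t₂ - t₁) by ring, le_div_iff₀ hdpos]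
    nlinarith [hmono]
  linarith
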